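/- Let D > 0, let N be a positive integer, and set x_j = −1 + (2j−1)/N for j = 1,…,N. Define ∇_{x_k}G(x_k,x_j) = (sign(x_k − x_j) − x_k)/(2D) for j ≠ k, and ∇_{x_k}G(x_k,x_k) = −x_k/(2D) (the x-derivative of the regular part H(x,z) = (1/(2D))(−1/3 − x²/2 − z²/2) evaluated at x = z = x_k). Then for every k ∈ {1,…,N}, Σ_{j=1}^{N} ∇_{x_k}G(x_k, x_j) = 0. -/

import Mathlib

open Real

/-- At the symmetric spike positions `x_j = −1 + (2j−1)/N`, the row sums of the
gradient matrix `∇𝒢` of the Neumann Green's function vanish: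
`Σ_j ∇_{x_k} G(x_k, x_j) = 0`, where `∇_{x_k}G(x_k,x_j) = (sign(x_k−x_j) − x_k)/(2D)`
for `j ≠ k` and `∇_{x_k}G(x_k,x_k) = −x_k/(2D)`. -/
theorem stmt_10 (D : ℝ) (hD : 0 < D) (N : ℕ) (hN : 0 < N)
    (x : Fin N → ℝ) (hx : ∀ j : Fin N, x j = -1 + (2 * (j : ℝ) + 1) / N) :
    ∀ k : Fin N,
      (∑ j : Fin N,
        if j = k then -(x k) / (2 * D)
        else (Real.sign (x k - x j) - x k) / (2 * D)) = 0 := by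
  intro k
  have hNpos : (0:ℝ) < N := by exact_mod_cast hN
  have key : ∀ j : Fin N,
      (if j = k then -(x k) / (2 * D)
        else (Real.sign (x k - x j) - x k) / (2 * D))
      = ((if (j:ℕ) < (k:ℕ) then (1:ℝ) else 0)
          - (if (k:ℕ) < (j:ℕ) then (1:ℝ) else 0) - x k) / (2 * D) := by
    intro j
    have hdiff : x k - x j = 2 * ((k:ℝ) - (j:ℝ)) / N := by
      rw [hx k, hx j]; field_simp; ring
    rcases lt_trichotomy ((j:ℕ)) ((k:ℕ)) with h | h | h
    · have hne : j ≠ k := fun hjk => by simp [hjk] at h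
      have hpos : 0 < x k - x j := by
        rw [hdiff]
        have hjk : (j:ℝ) < (k:ℝ) := by exact_mod_cast h
        have : 0 < 2 * ((k:ℝ) - (j:ℝ)) := by linarith
        exact div_pos this hNpos
      rw [if_neg hne, if_pos h, if_neg (not_lt_of_gt h), Real.sign_of_pos hpos]
      ring
    · have heq : j = k := Fin.ext h
      subst heq
      rw [if_pos rfl, if_neg (lt_irrefl _)]
      ring
    · have hne : j ≠ k := fun hjk => by simp [hjk] at h
      have hneg : x k - x j < 0 := by
        rw [hdiff]
        have hk : (k:ℝ) < (j:ℝ) := by exact_mod_cast h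
        have : 2 * ((k:ℝ) - (j:ℝ)) < 0 := by linarith
        exact div_neg_of_neg_of_pos this hNpos
      rw [if_neg hne, if_neg (not_lt_of_gt h), if_pos h, Real.sign_of_neg hneg]
      ring
  rw [Finset.sum_congr rfl (fun j _ => key j)]
  rw [← Finset.sum_div, div_eq_zero_iff]
  left
  rw [Fin.sum_univ_eq_sum_range
    (fun j => (if j < (k:ℕ) then (1:ℝ) else 0) - (if (k:ℕ) < j then (1:ℝ) else 0) - x k)]
  have h1 : (∑ j ∈ Finset.range N, (if j < (k:ℕ) then (1:ℝ) else 0)) = (k:ℕ) := by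
    rw [Finset.sum_boole]
    have : (Finset.range N).filter (· < (k:ℕ)) = Finset.range (k:ℕ) := by
      ext j
      simp only [Finset.mem_filter, Finset.mem_range]
      constructor
      · rintro ⟨_, h⟩; exact h
      · intro h; exact ⟨h.trans k.isLt, h⟩
    rw [this, Finset.card_range]
  have h2 : (∑ j ∈ Finset.range N, (if (k:ℕ) < j then (1:ℝ) else 0)) = (N - (k:ℕ) - 1 : ℕ) := by
    rw [Finset.sum_boole]
    have : (Finset.range N).filter (fun j => (k:ℕ) < j) = Finset.Ioo (k:ℕ) N := by
      ext j
      simp only [Finset.mem_filter, Finset.mem_range, Finset.mem_Ioo]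
      tauto
    rw [this, Nat.card_Ioo]
  simp only [Finset.sum_sub_distrib, h1, h2, Finset.sum_const, Finset.card_range, smul_eq_mul]
  rw [hx k]
  have hkN : (k:ℕ) < N := k.isLt
  have hcast : ((N - (k:ℕ) - 1 : ℕ) : ℝ) = (N:ℝ) - (k:ℕ) - 1 := by
    have : (k:ℕ) + 1 ≤ N := hkN
    push_cast [Nat.sub_sub, Nat.cast_sub this]
    ring
  rw [hcast]
  rw [nsmul_eq_mul]
  field_simp
  ring
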